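/- Let L₀, …, L_{r−1} be finitely many context-free languages over an alphabet containing two distinct letters 1 and 0. Then there exist natural numbers Q ≥ 1 and P such that for every p ≥ P, every k ∈ ℕ, and every j < r: if the word 1·0^{p} belongs to L_j, then the word 1·0^{p+kQ} also belongs to L_j. -/

import Mathlib

open ContextFreeGrammar

namespace CFPump

variable {T : Type*}

/-- Depth-indexed parse forests. `YF g d l w` : the sentential form `l` yields the word `w`
with all parse trees of depth ≤ d. -/
inductive YF (g : ContextFreeGrammar T) : ℕ → List (Symbol T g.NT) → List T → Prop
  | nil (d : ℕ) : YF g d [] []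
  | term (d : ℕ) (t : T) {l w} : YF g d l w → YF g d (Symbol.terminal t :: l) (t :: w)
  | nt (d : ℕ) {r : ContextFreeRule T g.NT} {l w₁ w₂} (hr : r ∈ g.rules) :
      YF g d r.output w₁ → YF g (d+1) l w₂ →
      YF g (d+1) (Symbol.nonterminal r.input :: l) (w₁ ++ w₂)

variable {g : ContextFreeGrammar T}

/-- one more than the max length of a rule RHS -/
noncomputable def M (g : ContextFreeGrammar T) : ℕ :=
  (g.rules.sup fun r => r.output.length) + 1

lemma one_le_M : 1 ≤ M g := Nat.succ_le_succ (Nat.zero_le _)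

/-- set of nonterminals appearing as inputs of rules -/
noncomputable def ins (g : ContextFreeGrammar T) : Finset g.NT :=
  @Finset.image _ _ (Classical.decEq _) ContextFreeRule.input g.rules

noncomputable def K (g : ContextFreeGrammar T) : ℕ := (ins g).card

lemma yf_mono {d l w} (h : YF g d l w) : ∀ e, d ≤ e → YF g e l w := by
  induction h with
  | nil d => exact fun e _ => YF.nil e
  | term d t _ ih => exact fun e he => YF.term e t (ih e he)
  | nt d hr _ _ ih₁ ih₂ =>
      intro e he
      have h1 : e = (e - 1) + 1 := by omega
      rw [h1]
      exact YF.nt _ hr (ih₁ _ (by omega)) (ih₂ _ (by omega))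

lemma yf_append {d l₁ w₁ l₂ w₂} (h₁ : YF g d l₁ w₁) (h₂ : YF g d l₂ w₂) :
    YF g d (l₁ ++ l₂) (w₁ ++ w₂) := by
  induction h₁ with
  | nil => simpa
  | term d t _ ih => exact YF.term d t (ih h₂)
  | nt d hr hy _ ih₁ ih₂ =>
      simpa [List.append_assoc] using YF.nt d hr hy (ih₂ h₂)

lemma yf_split {d} : ∀ (l₁ : List (Symbol T g.NT)) {l₂ w}, YF g d (l₁ ++ l₂) w →
    ∃ w₁ w₂, w = w₁ ++ w₂ ∧ YF g d l₁ w₁ ∧ YF g d l₂ w₂ := by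
  intro l₁
  induction l₁ with
  | nil => intro l₂ w h; exact ⟨[], w, rfl, YF.nil d, h⟩
  | cons s l₁ ih =>
      intro l₂ w h
      cases h with
      | term d t h =>
          obtain ⟨w₁, w₂, rfl, hw₁, hw₂⟩ := ih h
          exact ⟨t :: w₁, w₂, rfl, YF.term _ t hw₁, hw₂⟩
      | nt d hr hy h =>
          obtain ⟨w₁, w₂, rfl, hw₁, hw₂⟩ := ih h
          exact ⟨_ ++ w₁, w₂, by simp, YF.nt d hr hy hw₁, hw₂⟩

lemma yf_derives {d l w} (h : YF g d l w) : g.Derives l (w.map Symbol.terminal) := by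
  induction h with
  | nil => exact Derives.refl []
  | term d t _ ih =>
      simpa using ih.append_left [Symbol.terminal t]
  | nt d hr hy h ih₁ ih₂ =>
      rename_i r l w₁ w₂
      have h1 : g.Produces (Symbol.nonterminal r.input :: l) (r.output ++ l) :=
        ⟨r, hr, ContextFreeRule.Rewrites.head l⟩
      have h2 : g.Derives (r.output ++ l) (w₁.map Symbol.terminal ++ l) := ih₁.append_right l
      have h3 : g.Derives (w₁.map Symbol.terminal ++ l)
          (w₁.map Symbol.terminal ++ w₂.map Symbol.terminal) := ih₂.append_left _
      simpa using h1.trans_derives (h2.trans h3)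


lemma yf_of_word (w : List T) : YF g 0 (w.map Symbol.terminal) w := by
  induction w with
  | nil => exact YF.nil 0
  | cons t w ih => exact YF.term 0 t ih

lemma derives_yf {l : List (Symbol T g.NT)} {w : List T}
    (h : g.Derives l (w.map Symbol.terminal)) : ∃ d, YF g d l w := by
  induction h using Relation.ReflTransGen.head_induction_on with
  | refl => exact ⟨0, yf_of_word w⟩
  | head hprod _ ih =>
      obtain ⟨d, hd⟩ := ih
      obtain ⟨r, hr, hrw⟩ := hprod
      obtain ⟨p, q, rfl, rfl⟩ := hrw.exists_parts
      obtain ⟨wp, wrest, rfl, hwp, hwrest⟩ := yf_split p (by simpa using hd)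
      obtain ⟨wm, wq, rfl, hwm, hwq⟩ := yf_split r.output hwrest
      refine ⟨d + 1, ?_⟩
      have := yf_append (yf_mono hwp (d+1) (by omega))
        (YF.nt d hr hwm (yf_mono hwq (d+1) (by omega)))
      simpa using this

lemma yf_nil_inv {d w} (h : YF g d [] w) : w = [] := by cases h; rfl

lemma exists_piece {d} : ∀ {l : List (Symbol T g.NT)} {w}, YF g d l w → l ≠ [] →
    ∃ l₁ s l₂ w₁ ws w₂, l = l₁ ++ s :: l₂ ∧ w = w₁ ++ ws ++ w₂ ∧
      YF g d l₁ w₁ ∧ YF g d [s] ws ∧ YF g d l₂ w₂ ∧ w.length ≤ l.length * ws.length := by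
  intro l w h hl
  induction h with
  | nil => exact absurd rfl hl
  | term d t h ih =>
      rename_i l' w'
      rcases eq_or_ne l' [] with rfl | hne
      · have : w' = [] := yf_nil_inv h
        subst this
        exact ⟨[], _, [], [], [t], [], by simp, by simp, YF.nil d,
          YF.term d t (YF.nil d), YF.nil d, by simp⟩
      · obtain ⟨l₁, s, l₂, w₁, ws, w₂, he1, he2, h₁, hs, h₂, hb⟩ := ih hne
        rcases Nat.eq_zero_or_pos ws.length with hws | hws
        · have hw0 : w'.length = 0 := by
            rw [hws, Nat.mul_zero] at hb; omega
          refine ⟨[], _, l', [], [t], w', by simp, by simp, YF.nil d,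
            YF.term d t (YF.nil d), h, ?_⟩
          simp [hw0]
        · subst he1 he2
          refine ⟨Symbol.terminal t :: l₁, s, l₂, t :: w₁, ws, w₂, by simp, by simp,
            YF.term d t h₁, hs, h₂, ?_⟩
          simp only [List.length_cons, List.length_append] at hb ⊢
          nlinarith
  | nt d hr hy h ih₁ ih₂ =>
      rename_i r l' w₁ w₂
      have hA : YF g (d+1) [Symbol.nonterminal r.input] w₁ := by
        simpa using YF.nt d hr hy (YF.nil (d+1))
      rcases eq_or_ne l' [] with rfl | hne
      · have : w₂ = [] := yf_nil_inv h
        subst this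
        exact ⟨[], _, [], [], w₁, [], by simp, by simp, YF.nil _, hA, YF.nil _, by simp⟩
      · obtain ⟨l₁, s, l₂, w₁', ws, w₂', he1, he2, h₁, hs, h₂, hb⟩ := ih₂ hne
        rcases le_or_gt ws.length w₁.length with hle | hlt
        · refine ⟨[], Symbol.nonterminal r.input, l', [], w₁, w₂,
            by simp, by simp, YF.nil _, hA, h, ?_⟩
          simp only [List.length_append, List.length_cons, List.length_nil] at hb ⊢
          nlinarith
        · subst he1 he2
          refine ⟨Symbol.nonterminal r.input :: l₁, s, l₂, w₁ ++ w₁', ws, w₂',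
            by simp, by simp, YF.nt d hr hy h₁, hs, h₂, ?_⟩
          simp only [List.length_append, List.length_cons] at hb ⊢
          nlinarith

/-- one step of the heavy chain -/
def Rr (g : ContextFreeGrammar T) (a b : g.NT × List T) : Prop :=
  ∃ u y : List T, g.Derives [Symbol.nonterminal a.1]
      (u.map Symbol.terminal ++ [Symbol.nonterminal b.1] ++ y.map Symbol.terminal)
    ∧ a.2 = u ++ b.2 ++ y ∧ b.2.length < a.2.length ∧ a.2.length ≤ M g * b.2.length

/-- composable version -/
def Rc (g : ContextFreeGrammar T) (a b : g.NT × List T) : Prop :=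
  ∃ u y : List T, g.Derives [Symbol.nonterminal a.1]
      (u.map Symbol.terminal ++ [Symbol.nonterminal b.1] ++ y.map Symbol.terminal)
    ∧ a.2 = u ++ b.2 ++ y ∧ b.2.length < a.2.length

/-- a good heavy chain -/
structure GC (g : ContextFreeGrammar T) (c : List (g.NT × List T)) : Prop where
  ne : c ≠ []
  chain : c.Chain' (Rr g)
  mem : ∀ x ∈ c, x.1 ∈ ins g ∧ g.Derives [Symbol.nonterminal x.1] (List.map Symbol.terminal x.2)
  last : (c.getLast ne).2.length ≤ M g

lemma gc_memBound {c} (hc : GC g c) : ∀ x ∈ c, x.2.length ≤ (M g) ^ c.length := by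
  induction c with
  | nil => simp
  | cons a c ih =>
      intro x hx
      rcases eq_or_ne c [] with rfl | hne
      · simp at hx
        subst hx
        simpa using hc.last
      · have hc' : GC g c := by
          refine ⟨hne, hc.chain.tail, fun y hy => hc.mem y (List.mem_cons_of_mem a hy), ?_⟩
          have := hc.last
          rwa [List.getLast_cons hne] at this
        rcases List.mem_cons.mp hx with rfl | hx'
        · obtain ⟨b, c', rfl⟩ := List.exists_cons_of_ne_nil hne
          have hrel : Rr g x b := (List.isChain_cons_cons.mp hc.chain).1
          obtain ⟨u, y, -, -, -, hlen⟩ := hrel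
          have hb : b.2.length ≤ (M g) ^ (b :: c').length := ih hc' b (by simp)
          calc x.2.length ≤ M g * b.2.length := hlen
            _ ≤ M g * (M g) ^ (b :: c').length :=
                Nat.mul_le_mul_left _ hb
            _ = (M g) ^ ((b :: c').length + 1) := by ring
        · calc x.2.length ≤ (M g) ^ c.length := ih hc' x hx'
            _ ≤ (M g) ^ (c.length + 1) := Nat.pow_le_pow_right one_le_M (by omega)

lemma yf_nt_inv {d A w} (h : YF g d [Symbol.nonterminal A] w) :
    ∃ d₀ r, d = d₀ + 1 ∧ r ∈ g.rules ∧ r.input = A ∧ YF g d₀ r.output w := by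
  cases h with
  | nt d₀ hr hy h' => exact ⟨d₀, _, rfl, hr, rfl, by simpa [yf_nil_inv h'] using hy⟩

lemma yf_term_inv {d t w} (h : YF g d [Symbol.terminal t] w) : w = [t] := by
  cases h with
  | term d _ h' => rw [yf_nil_inv h']

lemma input_mem_ins {r : ContextFreeRule T g.NT} (hr : r ∈ g.rules) : r.input ∈ ins g := by
  letI : DecidableEq g.NT := Classical.decEq _
  unfold ins
  exact Finset.mem_image_of_mem _ hr

lemma output_le {r : ContextFreeRule T g.NT} (hr : r ∈ g.rules) :
    r.output.length + 1 ≤ M g := by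
  unfold M; exact Nat.succ_le_succ (Finset.le_sup (f := fun r => r.output.length) hr)

lemma sandwich_der {r : ContextFreeRule T g.NT} {l₁ l₂ : List (Symbol T g.NT)}
    {wa wb : List T} {B : g.NT} (hr : r ∈ g.rules)
    (hout : r.output = l₁ ++ Symbol.nonterminal B :: l₂)
    (h1 : g.Derives l₁ (wa.map Symbol.terminal)) (h2 : g.Derives l₂ (wb.map Symbol.terminal)) :
    g.Derives [Symbol.nonterminal r.input]
      (wa.map Symbol.terminal ++ [Symbol.nonterminal B] ++ wb.map Symbol.terminal) := by
  have h0 : g.Produces [Symbol.nonterminal r.input] (l₁ ++ Symbol.nonterminal B :: l₂) := by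
    rw [← hout]; exact ⟨r, hr, ContextFreeRule.Rewrites.input_output⟩
  have s1 : g.Derives (l₁ ++ Symbol.nonterminal B :: l₂)
      (wa.map Symbol.terminal ++ Symbol.nonterminal B :: l₂) := h1.append_right _
  have s2 : g.Derives (wa.map Symbol.terminal ++ Symbol.nonterminal B :: l₂)
      (wa.map Symbol.terminal ++ Symbol.nonterminal B :: wb.map Symbol.terminal) := by
    have := (h2.append_left [Symbol.nonterminal B]).append_left (wa.map Symbol.terminal)
    simpa using this
  have := h0.trans_derives (s1.trans s2)
  simpa using this

lemma ce {d : ℕ} : ∀ {A : g.NT} {w : List T}, YF g d [Symbol.nonterminal A] w →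
    ∃ c, GC g c ∧ c.head? = some (A, w) ∧ w.length ≤ (M g) ^ c.length := by
  induction d using Nat.strong_induction_on with
  | _ d ih =>
  intro A w h
  obtain ⟨d₀, r, rfl, hr, rfl, hy⟩ := yf_nt_inv h
  by_cases hbig : w.length ≤ M g
  · refine ⟨[(r.input, w)], ⟨by simp, List.isChain_singleton _, ?_, by simpa⟩, by simp, by simpa⟩
    intro x hx
    simp at hx
    subst hx
    exact ⟨input_mem_ins hr, yf_derives h⟩
  · push_neg at hbig
    have hne : r.output ≠ [] := by
      rintro hout
      rw [hout] at hy
      rw [yf_nil_inv hy] at hbig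
      simp at hbig
    obtain ⟨l₁, s, l₂, wa, ws, wb, hout, hw, h₁, hs, h₂, hb⟩ := exists_piece hy hne
    have houtle := output_le hr
    have hws2 : 2 ≤ ws.length := by
      by_contra hws1
      push_neg at hws1
      have : w.length ≤ r.output.length := by
        calc w.length ≤ r.output.length * ws.length := hb
          _ ≤ r.output.length * 1 := Nat.mul_le_mul_left _ (by omega)
          _ = r.output.length := Nat.mul_one _
      omega
    obtain ⟨B, rfl⟩ : ∃ B, s = Symbol.nonterminal B := by
      cases s with
      | terminal t =>
          rw [yf_term_inv hs] at hws2
          simp at hws2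
      | nonterminal B => exact ⟨B, rfl⟩
    obtain ⟨c, hc, hhead, hcb⟩ := ih d₀ (by omega) hs
    obtain ⟨c', rfl⟩ : ∃ c', c = (B, ws) :: c' := by
      cases c with
      | nil => simp at hhead
      | cons a c' => simp at hhead; exact ⟨c', by rw [hhead]⟩
    have hsand : g.Derives [Symbol.nonterminal r.input]
        (wa.map Symbol.terminal ++ [Symbol.nonterminal B] ++ wb.map Symbol.terminal) :=
      sandwich_der hr hout (yf_derives h₁) (yf_derives h₂)
    have hwlen : w.length ≤ M g * ws.length := by
      calc w.length ≤ r.output.length * ws.length := hb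
        _ ≤ M g * ws.length := Nat.mul_le_mul_right _ (by omega)
    have hder : g.Derives [Symbol.nonterminal r.input] (w.map Symbol.terminal) := yf_derives h
    rcases lt_or_eq_of_le (show ws.length ≤ w.length by rw [hw]; simp; omega) with hlt | heqlen
    · -- strict decrease: prepend to the chain
      refine ⟨(r.input, w) :: (B, ws) :: c', ⟨by simp, ?_, ?_, ?_⟩, by simp, ?_⟩
      · exact List.isChain_cons_cons.mpr ⟨⟨wa, wb, hsand, hw, hlt, hwlen⟩, hc.chain⟩
      · intro x hx
        rcases List.mem_cons.mp hx with rfl | hx'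
        · exact ⟨input_mem_ins hr, hder⟩
        · exact hc.mem x hx'
      · rw [List.getLast_cons (by simp)]
        exact hc.last
      · calc w.length ≤ M g * ws.length := hwlen
          _ ≤ M g * (M g) ^ ((B, ws) :: c').length := Nat.mul_le_mul_left _ hcb
          _ = (M g) ^ (((r.input, w) :: (B, ws) :: c').length) := by simp; ring
    · -- no decrease: wa = wb = [], replace the head of the chain
      rw [hw] at heqlen
      simp at heqlen
      have hwa : wa = [] := List.length_eq_zero_iff.mp (by omega)
      have hwb : wb = [] := List.length_eq_zero_iff.mp (by omega)
      subst hwa hwb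
      have hwws : w = ws := by simpa using hw
      subst hwws
      have hBder : g.Derives [Symbol.nonterminal r.input] [Symbol.nonterminal B] := by
        simpa using hsand
      cases c' with
      | nil =>
          exfalso
          have := hc.last
          simp at this
          omega
      | cons b c'' =>
          have hrel : Rr g (B, w) b := List.isChain_cons_cons.mp hc.chain |>.1
          obtain ⟨u, y, hbder, hbw, hblt, hble⟩ := hrel
          refine ⟨(r.input, w) :: b :: c'', ⟨by simp, ?_, ?_, ?_⟩, by simp, ?_⟩
          · refine List.isChain_cons_cons.mpr ⟨⟨u, y, hBder.trans hbder, hbw, hblt, hble⟩, ?_⟩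
            exact (List.isChain_cons_cons.mp hc.chain).2
          · intro x hx
            rcases List.mem_cons.mp hx with rfl | hx'
            · exact ⟨input_mem_ins hr, hder⟩
            · exact hc.mem x (List.mem_cons_of_mem _ hx')
          · rw [List.getLast_cons (by simp)]
            have := hc.last
            rwa [List.getLast_cons (by simp)] at this
          · simpa using hcb

lemma rr_rc {a b : g.NT × List T} (h : Rr g a b) : Rc g a b := by
  obtain ⟨u, y, h1, h2, h3, -⟩ := h
  exact ⟨u, y, h1, h2, h3⟩

lemma rc_trans {a b c : g.NT × List T} (hab : Rc g a b) (hbc : Rc g b c) : Rc g a c := by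
  obtain ⟨u₁, y₁, d1, e1, l1⟩ := hab
  obtain ⟨u₂, y₂, d2, e2, l2⟩ := hbc
  refine ⟨u₁ ++ u₂, y₂ ++ y₁, ?_, by rw [e1, e2]; simp, by omega⟩
  have := (d2.append_right (y₁.map Symbol.terminal)).append_left (u₁.map Symbol.terminal)
  refine d1.trans ?_
  have h' := this
  simpa [List.append_assoc] using h'

lemma transgen_rc {a b : g.NT × List T} (h : Relation.TransGen (Rr g) a b) : Rc g a b := by
  induction h with
  | single h => exact rr_rc h
  | tail _ h ih => exact rc_trans ih (rr_rc h)

lemma chain'_transgen_of_mem {R : (g.NT × List T) → (g.NT × List T) → Prop} :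
    ∀ {c a y}, List.Chain' R (a :: c) → y ∈ c → Relation.TransGen R a y := by
  intro c
  induction c with
  | nil => intro a y _ hy; simp at hy
  | cons b c ih =>
      intro a y hch hy
      rcases List.mem_cons.mp hy with rfl | hy'
      · exact Relation.TransGen.single (List.isChain_cons_cons.mp hch).1
      · exact Relation.TransGen.head (List.isChain_cons_cons.mp hch).1 (ih (List.isChain_cons_cons.mp hch).2 hy')

lemma chain'_transgen_of_sublist {R : (g.NT × List T) → (g.NT × List T) → Prop} :
    ∀ {c x y}, List.Chain' R c → List.Sublist [x, y] c → Relation.TransGen R x y := by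
  intro c
  induction c with
  | nil => intro x y _ hs; cases hs
  | cons a c ih =>
      intro x y hch hs
      cases hs with
      | cons _ hs' => exact ih hch.tail hs'
      | cons_cons _ hs' =>
          exact chain'_transgen_of_mem hch (hs'.subset (by simp))

lemma exists_dup_pair {l : List (g.NT × List T)} (hmem : ∀ x ∈ l, x.1 ∈ ins g)
    (hlen : K g < l.length) : ∃ a b, List.Sublist [a, b] l ∧ a.1 = b.1 := by
  classical
  have hnd : ¬ (l.map Prod.fst).Nodup := by
    intro hnd
    have hsub : (l.map Prod.fst).toFinset ⊆ ins g := by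
      intro x hx
      simp only [List.mem_toFinset, List.mem_map] at hx
      obtain ⟨a, ha, rfl⟩ := hx
      exact hmem a ha
    have := Finset.card_le_card hsub
    rw [List.toFinset_card_of_nodup hnd] at this
    simp only [List.length_map] at this
    exact absurd this (by unfold K at hlen; omega)
  obtain ⟨x, hx⟩ := List.exists_duplicate_iff_not_nodup.mpr hnd
  have hs : List.Sublist [x, x] (l.map Prod.fst) := List.duplicate_iff_sublist.mp hx
  obtain ⟨s', hs', heq⟩ := List.sublist_map_iff.mp hs
  cases s' with
  | nil => simp at heq
  | cons a sa =>
    cases sa with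
    | nil => simp at heq
    | cons b sb =>
      cases sb with
      | cons c sc => simp at heq
      | nil =>
          simp only [List.map_cons, List.map_nil, List.cons.injEq, and_true] at heq
          exact ⟨a, b, hs', heq.1.symm.trans heq.2⟩

lemma join_replicate_succ' (k : ℕ) (u : List T) :
    (List.replicate (k+1) u).flatten = (List.replicate k u).flatten ++ u := by
  induction k with
  | zero => simp
  | succ k ih =>
      rw [List.replicate_succ, List.flatten_cons, ih, ← List.append_assoc, ← ih,
        List.replicate_succ, List.flatten_cons, List.append_assoc]

lemma pump_der {A : g.NT} {u y : List T}
    (h : g.Derives [Symbol.nonterminal A]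
      (u.map Symbol.terminal ++ [Symbol.nonterminal A] ++ y.map Symbol.terminal)) :
    ∀ k : ℕ, g.Derives [Symbol.nonterminal A]
      (((List.replicate k u).flatten.map Symbol.terminal) ++ [Symbol.nonterminal A] ++
        ((List.replicate k y).flatten.map Symbol.terminal)) := by
  intro k
  induction k with
  | zero =>
      simp only [List.replicate_zero, List.flatten_nil, List.map_nil, List.nil_append,
        List.append_nil]
      exact Derives.refl _
  | succ k ih =>
      refine ih.trans ?_
      have hmid := (h.append_right ((List.replicate k y).flatten.map Symbol.terminal)).append_left
        ((List.replicate k u).flatten.map Symbol.terminal)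
      rw [join_replicate_succ' k u, List.replicate_succ, List.flatten_cons]
      simpa [List.append_assoc] using hmid

lemma gc_suffix {c t : List (g.NT × List T)} (hc : GC g c) (hs : t <:+ c) (hne : t ≠ []) :
    GC g t := by
  refine ⟨hne, hc.chain.suffix hs, fun x hx => hc.mem x (hs.sublist.subset hx), ?_⟩
  obtain ⟨sp, rfl⟩ := hs
  have h2 := hc.last
  rwa [List.getLast_append_of_ne_nil _ hne] at h2

lemma all_zero_replicate {zero : T} {l : List T} {q : ℕ} (hlen : l.length = q)
    (hz : ∀ x ∈ l, x = zero) : l = List.replicate q zero :=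
  List.eq_replicate_iff.mpr ⟨hlen, hz⟩

lemma prefix_nil_of_count [DecidableEq T] {one : T} {l r w' : List T}
    (h : l ++ r = one :: w') (h0 : l.count one = 0) : l = [] := by
  cases l with
  | nil => rfl
  | cons x l' =>
      simp only [List.cons_append, List.cons.injEq] at h
      rcases h with ⟨rfl, -⟩
      rw [List.count_cons_self] at h0
      omega

lemma mem_flatten_replicate {x : T} {m : ℕ} {l : List T}
    (h : x ∈ (List.replicate m l).flatten) : x ∈ l := by
  rw [List.mem_flatten] at h
  obtain ⟨s, hs, hx⟩ := h
  rwa [List.eq_of_mem_replicate hs] at hx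

lemma flatten_replicate_nil {m : ℕ} : (List.replicate m ([] : List T)).flatten = [] := by
  induction m with
  | zero => rfl
  | succ m ih => simp [List.replicate_succ, ih]

lemma eq_one_rep [DecidableEq T] {one zero : T} (hone : one ≠ zero) {W : List T} {q : ℕ}
    (hlen : W.length = q + 1) (helems : ∀ x ∈ W, x = one ∨ x = zero)
    (hcount : W.count one = 1) (hhead : W.head? = some one) :
    W = one :: List.replicate q zero := by
  cases W with
  | nil => simp at hhead
  | cons x W' =>
      simp only [List.head?_cons, Option.some.injEq] at hhead
      rw [hhead] at hcount ⊢
      congr 1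
      refine all_zero_replicate (by simpa using hlen) ?_
      intro y hy
      rcases helems y (List.mem_cons_of_mem _ hy) with h | h
      · exfalso
        rw [List.count_cons_self] at hcount
        have : 0 < W'.count one := List.count_pos_iff.mpr (h ▸ hy)
        omega
      · exact h

lemma per_grammar (one zero : T) (hone : one ≠ zero) (g : ContextFreeGrammar T) :
    ∃ n : ℕ, 1 ≤ n ∧ ∀ p : ℕ, n ≤ p → (one :: List.replicate p zero) ∈ g.language →
      ∃ e : ℕ, 1 ≤ e ∧ e ≤ n ∧ ∀ k : ℕ,
        (one :: List.replicate (p + k * e) zero) ∈ g.language := by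
  classical
  have hM1 : 1 ≤ M g := one_le_M
  refine ⟨(M g) ^ (2 * K g + 2), Nat.one_le_pow _ _ (by omega), ?_⟩
  intro p hp hmem
  set n := (M g) ^ (2 * K g + 2) with hn
  set w := one :: List.replicate p zero with hw
  rw [ContextFreeGrammar.mem_language_iff] at hmem
  obtain ⟨d, hyf⟩ := derives_yf hmem
  obtain ⟨c, hc, hhead, hlenb⟩ := ce hyf
  have hwlen : w.length = p + 1 := by simp [hw]
  have hMlt : n < (M g) ^ c.length := by
    have h1 : n < w.length := by omega
    omega
  have hM2 : 2 ≤ M g := by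
    by_contra h'
    have hM1' : M g = 1 := by omega
    rw [hn, hM1'] at hMlt
    simp at hMlt
  have hclen : 2 * K g + 2 < c.length := by
    rw [hn] at hMlt
    exact (Nat.pow_lt_pow_iff_right hM2).mp hMlt
  set t := c.drop (c.length - (2 * K g + 2)) with ht
  have htlen : t.length = 2 * K g + 2 := by
    rw [ht, List.length_drop]
    omega
  have htsuf : t <:+ c := List.drop_suffix _ _
  have htne : t ≠ [] := by
    intro h0
    rw [h0] at htlen
    simp at htlen
  have hgct : GC g t := gc_suffix hc htsuf htne
  have hbound : ∀ x ∈ t, x.2.length ≤ n := by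
    intro x hx
    have := gc_memBound hgct x hx
    rwa [htlen] at this
  -- find a repeated nonterminal within a homogeneous class
  obtain ⟨a, b, habsub, habeq, hclass⟩ :
      ∃ a b, List.Sublist [a, b] t ∧ a.1 = b.1 ∧ (one ∈ a.2 ↔ one ∈ b.2) := by
    set t₁ := t.filter (fun x => decide (one ∈ x.2)) with ht₁
    set t₂ := t.filter (fun x => !decide (one ∈ x.2)) with ht₂
    have hsplit : t.length = t₁.length + t₂.length := List.length_eq_length_filter_add _
    have hcases : K g < t₁.length ∨ K g < t₂.length := by omega
    rcases hcases with h1 | h1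
    · obtain ⟨a, b, hs, he⟩ := exists_dup_pair
        (fun x hx => (hgct.mem x (List.filter_sublist.subset hx)).1) h1
      have hamem : a ∈ t₁ := hs.subset (by simp)
      have hbmem : b ∈ t₁ := hs.subset (by simp)
      rw [ht₁, List.mem_filter] at hamem hbmem
      refine ⟨a, b, hs.trans List.filter_sublist, he, ?_⟩
      simp only [decide_eq_true_eq] at hamem hbmem
      exact ⟨fun _ => hbmem.2, fun _ => hamem.2⟩
    · obtain ⟨a, b, hs, he⟩ := exists_dup_pair
        (fun x hx => (hgct.mem x (List.filter_sublist.subset hx)).1) h1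
      have hamem : a ∈ t₂ := hs.subset (by simp)
      have hbmem : b ∈ t₂ := hs.subset (by simp)
      rw [ht₂, List.mem_filter] at hamem hbmem
      refine ⟨a, b, hs.trans List.filter_sublist, he, ?_⟩
      simp only [Bool.not_eq_eq_eq_not, Bool.not_true, decide_eq_false_iff_not] at hamem hbmem
      exact ⟨fun h => absurd h hamem.2, fun h => absurd h hbmem.2⟩
  have hat : a ∈ t := habsub.subset (by simp)
  have hbt : b ∈ t := habsub.subset (by simp)
  -- connect the head of the chain to the pair
  obtain ⟨h0, c0, rfl⟩ : ∃ h0 c0, c = h0 :: c0 := by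
    cases c with
    | nil => simp at hhead
    | cons h0 c0 => exact ⟨h0, c0, rfl⟩
  have hh0 : h0 = (g.initial, w) := by simpa using hhead
  subst hh0
  have hsub3 : List.Sublist [(g.initial, w), a, b] ((g.initial, w) :: c0) := by
    have hdec : (g.initial, w) :: c0 =
        List.take (((g.initial, w) :: c0).length - (2 * K g + 2)) ((g.initial, w) :: c0) ++ t :=
      (List.take_append_drop _ _).symm
    rw [hdec]
    have hpos : ((g.initial, w) :: c0).length - (2 * K g + 2) =
        (((g.initial, w) :: c0).length - (2 * K g + 2) - 1) + 1 := by
      simp only [List.length_cons] at hclen ⊢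
      omega
    rw [hpos, List.take_succ_cons]
    exact List.Sublist.append
      (List.Sublist.cons₂ _ (List.nil_sublist _)) habsub
  have hra : Rc g (g.initial, w) a :=
    transgen_rc (chain'_transgen_of_sublist hc.chain
      (List.Sublist.trans (List.Sublist.cons₂ _ (List.Sublist.cons₂ _ (List.nil_sublist _))) hsub3))
  have hrb : Rc g a b :=
    transgen_rc (chain'_transgen_of_sublist hc.chain (habsub.trans htsuf.sublist))
  have hbder : g.Derives [Symbol.nonterminal b.1] (b.2.map Symbol.terminal) :=
    (hc.mem b (htsuf.sublist.subset hbt)).2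
  have haBound : a.2.length ≤ n := hbound a hat
  obtain ⟨U, Y, hUder, hUeq, hUlt⟩ := hra
  obtain ⟨V, X, hVder, hVeq, hVlt⟩ := hrb
  rw [habeq] at hVder hUder
  simp only at hUeq hVeq
  set e := V.length + X.length with hee
  have hlens : a.2.length = V.length + b.2.length + X.length := by
    rw [hVeq]; simp; omega
  have he1 : 1 ≤ e := by omega
  have hen : e ≤ n := by omega
  refine ⟨e, he1, hen, ?_⟩
  intro k
  -- the pumped word is in the language
  set Vs := (List.replicate (k+1) V).flatten with hVs
  set Xs := (List.replicate (k+1) X).flatten with hXs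
  have hpump := pump_der hVder (k+1)
  have hmid : g.Derives [Symbol.nonterminal b.1]
      ((Vs ++ b.2 ++ Xs).map Symbol.terminal) := by
    refine hpump.trans ?_
    simp only [List.map_append]
    exact (hbder.append_left _).append_right _
  have hfull : g.Derives [Symbol.nonterminal g.initial]
      ((U ++ (Vs ++ b.2 ++ Xs) ++ Y).map Symbol.terminal) := by
    simp only [List.map_append] at hmid
    refine hUder.trans ?_
    simp only [List.map_append]
    exact (hmid.append_left _).append_right _
  have hWmem : (U ++ (Vs ++ b.2 ++ Xs) ++ Y) ∈ g.language := hfull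
  -- identify the pumped word
  suffices hfin : U ++ (Vs ++ b.2 ++ Xs) ++ Y = one :: List.replicate (p + k * e) zero by
    rw [← hfin]; exact hWmem
  have hwdec : U ++ (V ++ b.2 ++ X) ++ Y = one :: List.replicate p zero := by
    rw [← hVeq, ← hUeq]
  have hVslen : Vs.length = (k+1) * V.length := by simp [hVs, Nat.mul_comm]
  have hXslen : Xs.length = (k+1) * X.length := by simp [hXs, Nat.mul_comm]
  have hlensum : U.length + V.length + b.2.length + X.length + Y.length = p + 1 := by
    have := congrArg List.length hwdec
    simp at this
    omega
  -- count of `one`s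
  have hcnt : U.count one + (V.count one + b.2.count one + X.count one) + Y.count one = 1 := by
    have := congrArg (List.count one) hwdec
    simp only [List.count_append, List.count_cons_self] at this
    rw [show (List.replicate p zero).count one = 0 from
      List.count_eq_zero.mpr (fun hm => hone (List.eq_of_mem_replicate hm))] at this
    omega
  have hcV : V.count one = 0 ∧ X.count one = 0 := by
    by_cases hb1 : one ∈ b.2
    · have hbpos : 0 < b.2.count one := List.count_pos_iff.mpr hb1
      constructor <;> omega
    · have ha1 : one ∉ a.2 := fun h => hb1 (hclass.mp h)
      rw [hVeq] at ha1
      constructor <;> refine List.count_eq_zero.mpr fun hm => ha1 ?_ <;> simp [hm]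
  have hVnm : one ∉ V := List.count_eq_zero.mp hcV.1
  have hXnm : one ∉ X := List.count_eq_zero.mp hcV.2
  have hVsc : Vs.count one = 0 :=
    List.count_eq_zero.mpr fun h => hVnm (mem_flatten_replicate (hVs ▸ h))
  have hXsc : Xs.count one = 0 :=
    List.count_eq_zero.mpr fun h => hXnm (mem_flatten_replicate (hXs ▸ h))
  have hlenW : (U ++ (Vs ++ b.2 ++ Xs) ++ Y).length = (p + k * e) + 1 := by
    simp only [List.length_append, hVslen, hXslen]
    rw [hee]
    ring_nf
    ring_nf at hlensum
    omega
  have hcntW : (U ++ (Vs ++ b.2 ++ Xs) ++ Y).count one = 1 := by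
    simp only [List.count_append, hVsc, hXsc]
    omega
  have helemsW : ∀ x ∈ U ++ (Vs ++ b.2 ++ Xs) ++ Y, x = one ∨ x = zero := by
    intro x hx
    have hxw : x ∈ one :: List.replicate p zero := by
      rw [← hwdec]
      simp only [List.mem_append] at hx ⊢
      rcases hx with (hx | ((hx | hx) | hx)) | hx
      · exact Or.inl (Or.inl hx)
      · exact Or.inl (Or.inr (Or.inl (Or.inl (mem_flatten_replicate (hVs ▸ hx)))))
      · exact Or.inl (Or.inr (Or.inl (Or.inr hx)))
      · exact Or.inl (Or.inr (Or.inr (mem_flatten_replicate (hXs ▸ hx))))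
      · exact Or.inr hx
    rcases List.mem_cons.mp hxw with rfl | h
    · exact Or.inl rfl
    · exact Or.inr (List.eq_of_mem_replicate h)
  have hheadW : (U ++ (Vs ++ b.2 ++ Xs) ++ Y).head? = some one := by
    cases U with
    | cons u0 U' =>
        simp only [List.cons_append, List.cons.injEq] at hwdec
        simp [hwdec.1]
    | nil =>
        simp only [List.nil_append] at hwdec ⊢
        have hV : V = [] := prefix_nil_of_count (by simpa [List.append_assoc] using hwdec) hcV.1
        subst hV
        have hVsnil : Vs = [] := by rw [hVs]; exact flatten_replicate_nil
        rw [hVsnil]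
        simp only [List.nil_append] at hwdec ⊢
        obtain ⟨bl, hb2⟩ : ∃ bl, b.2 = bl := ⟨_, rfl⟩
        rw [hb2] at hwdec ⊢
        cases bl with
        | nil =>
          simp only [List.nil_append] at hwdec ⊢
          have hX : X = [] := prefix_nil_of_count (by simpa [List.append_assoc] using hwdec) hcV.2
          subst hX
          have hXsnil : Xs = [] := by rw [hXs]; exact flatten_replicate_nil
          rw [hXsnil]
          simp only [List.nil_append, List.append_nil] at hwdec ⊢
          rw [hwdec]
          rfl
        | cons b0 b' =>
          simp only [List.cons_append, List.cons.injEq] at hwdec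
          simp [hwdec.1]
  exact eq_one_rep hone hlenW helemsW hcntW hheadW


end CFPump

/-- Given finitely many context-free languages `L 0, …, L (r-1)` over an
alphabet containing two distinct letters `one` and `zero`, there exist `Q ≥ 1` and `P`
such that for every `p ≥ P`, every `k` and every `j < r`: if `1·0^p ∈ L j` then
`1·0^(p + k·Q) ∈ L j`. -/
theorem stmt1 {α : Type*} (one zero : α) (hne : one ≠ zero)
    (r : ℕ) (L : Fin r → Language α) (hL : ∀ j, (L j).IsContextFree) :
    ∃ Q : ℕ, 1 ≤ Q ∧ ∃ P : ℕ, ∀ p : ℕ, P ≤ p → ∀ k : ℕ, ∀ j : Fin r,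
      one :: List.replicate p zero ∈ L j →
      one :: List.replicate (p + k * Q) zero ∈ L j := by
  classical
  choose g hgL using hL
  choose n hn1 hn2 using fun j => CFPump.per_grammar one zero hne (g j)
  refine ⟨∏ j : Fin r, (n j).factorial, Finset.one_le_prod' (fun j _ => (n j).factorial_pos), ?_⟩
  refine ⟨Finset.univ.sup n, ?_⟩
  intro p hp k j hmem
  rw [← hgL j] at hmem ⊢
  have hpn : n j ≤ p := le_trans (Finset.le_sup (Finset.mem_univ j)) hp
  obtain ⟨e, he1, hen, hall⟩ := hn2 j p hpn hmem
  have hdvd : e ∣ ∏ j : Fin r, (n j).factorial :=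
    dvd_trans (Nat.dvd_factorial he1 hen)
      (Finset.dvd_prod_of_mem (fun j => (n j).factorial) (Finset.mem_univ j))
  obtain ⟨c, hc⟩ := hdvd
  have := hall (k * c)
  rwa [show p + k * c * e = p + k * ∏ j : Fin r, (n j).factorial by
    rw [hc]; ring] at this
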